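/- Let A be a nonzero finite-dimensional associative F-algebra of n×n matrices all of whose elements are nilpotent. Then the common nullspace {v ∈ F^n : a v = 0 for all a ∈ A} is nonzero. -/

import Mathlib

open Matrix

attribute [local instance 100] LieRing.ofAssociativeRing

/-- A nonzero (non-unital) algebra of `n × n` matrices all of whose elements are nilpotent
has nonzero common nullspace. -/
theorem stmt3 {n : ℕ} {F : Type*} [Field F]
    (A : NonUnitalSubalgebra F (Matrix (Fin n) (Fin n) F))
    (hA : A ≠ ⊥)
    (hnil : ∀ a ∈ A, a ^ n = 0) :
    ∃ v : Fin n → F, v ≠ 0 ∧ ∀ a ∈ A, a *ᵥ v = 0 := by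
  -- n ≠ 0
  have hn : n ≠ 0 := by
    rintro rfl
    refine hA ?_
    ext a
    rw [NonUnitalAlgebra.mem_bot, Subsingleton.elim a 0]
    exact iff_of_true (zero_mem A) rfl
  -- The algebra isomorphism from matrices to endomorphisms
  set φ : Matrix (Fin n) (Fin n) F ≃ₐ[F] ((Fin n → F) →ₗ[F] Fin n → F) :=
    Matrix.toLinAlgEquiv' with hφ
  have hφapp : ∀ (a : Matrix (Fin n) (Fin n) F) (v : Fin n → F), φ a v = a *ᵥ v := by
    intro a v
    simp [hφ, Matrix.toLinAlgEquiv'_apply]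
  -- The Lie subalgebra of `End F (Fin n → F)` given by the image of `A`.
  let L : LieSubalgebra F (Module.End F (Fin n → F)) :=
    { carrier := (A.toSubmodule.map (φ.toLinearMap :
        Matrix (Fin n) (Fin n) F →ₗ[F] Module.End F (Fin n → F)) : Set _)
      add_mem' := fun ha hb => Submodule.add_mem _ ha hb
      zero_mem' := Submodule.zero_mem _
      smul_mem' := fun c _ h => Submodule.smul_mem _ c h
      lie_mem' := by
        rintro _ _ ⟨a, ha, rfl⟩ ⟨b, hb, rfl⟩
        refine ⟨a * b - b * a, A.sub_mem (A.mul_mem ha hb) (A.mul_mem hb ha), ?_⟩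
        simp [Ring.lie_def] }
  haveI : IsNoetherian F L := by
    have : FiniteDimensional F L := FiniteDimensional.finiteDimensional_submodule
      (A.toSubmodule.map (φ.toLinearMap :
        Matrix (Fin n) (Fin n) F →ₗ[F] Module.End F (Fin n → F)))
    exact IsNoetherian.iff_fg.mpr this
  have hengel := LieAlgebra.isEngelian_of_isNoetherian (R := F) (L := L)
  haveI hnilmod : LieModule.IsNilpotent L (Fin n → F) := by
    apply hengel
    rintro ⟨x, hx⟩
    obtain ⟨a, ha, rfl⟩ := hx
    have hEnd : LieModule.toEnd F L (Fin n → F)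
        ⟨φ.toLinearMap a, ⟨a, ha, rfl⟩⟩ = φ a := rfl
    rw [hEnd]
    exact ⟨n, by rw [← map_pow, hnil a ha, map_zero]⟩
  haveI : Nontrivial (Fin n → F) := by
    refine ⟨0, Function.update 0 ⟨0, Nat.pos_of_ne_zero hn⟩ 1, ?_⟩
    intro h
    have := congrFun h ⟨0, Nat.pos_of_ne_zero hn⟩
    simp at this
  haveI := LieModule.nontrivial_max_triv_of_isNilpotent (R := F) (L := L)
    (M := Fin n → F)
  obtain ⟨⟨v, hv⟩, hvne⟩ := exists_ne (0 : LieModule.maxTrivSubmodule F L (Fin n → F))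
  refine ⟨v, ?_, ?_⟩
  · intro h
    exact hvne (Subtype.ext h)
  · intro a ha
    have := (LieModule.mem_maxTrivSubmodule F L (Fin n → F) v).mp hv
      ⟨φ.toLinearMap a, ⟨a, ha, rfl⟩⟩
    rw [← hφapp a v]
    exact this
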